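/- Let k ≥ 1 and let c_1, c_2, c_3, c_4 : (Fin 4 → Fin k) → ℝ be the payoff functions of a game G ∈ 𝒢_{[4;k]}. Then G is symmetric if and only if: (i) c_1(x) = c_2(x ∘ μ_1), c_2(x) = c_3(x ∘ μ_2), and c_3(x) = c_4(x ∘ μ_3) for every profile x; and (ii) for every nondecreasing triple p : Fin 3 → Fin k, every q in the S_3-orbit of p, and every s ∈ Fin k, c_4 takes the same value on the profile whose first three coordinates are p and last coordinate is s as on the profile whose first three coordinates are q and last coordinate is s. -/

import Mathlib

/-- Extend a permutation of `Fin 3` to a permutation of `Fin 4` fixing the last coordinate. -/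
def extPerm (σ : Equiv.Perm (Fin 3)) : Equiv.Perm (Fin 4) where
  toFun := Fin.snoc (fun i => (σ i).castSucc) (Fin.last 3)
  invFun := Fin.snoc (fun i => (σ⁻¹ i).castSucc) (Fin.last 3)
  left_inv := by
    intro j
    cases j using Fin.lastCases with
    | last => simp only [Fin.snoc_last]
    | cast i => simp
  right_inv := by
    intro j
    cases j using Fin.lastCases with
    | last => simp only [Fin.snoc_last]
    | cast i => simp

lemma extPerm_castSucc (σ : Equiv.Perm (Fin 3)) (i : Fin 3) :
    extPerm σ i.castSucc = (σ i).castSucc := by simp [extPerm]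

lemma extPerm_last (σ : Equiv.Perm (Fin 3)) :
    extPerm σ (Fin.last 3) = Fin.last 3 := by simp only [extPerm, Equiv.coe_fn_mk, Fin.snoc_last]

lemma extPerm_inv (σ : Equiv.Perm (Fin 3)) : (extPerm σ)⁻¹ = extPerm σ⁻¹ := by
  apply Equiv.ext
  intro j
  cases j using Fin.lastCases with
  | last => simp [extPerm, Equiv.Perm.inv_def]
  | cast i => simp [extPerm, Equiv.Perm.inv_def]

lemma snoc_extPerm {k : ℕ} (p : Fin 3 → Fin k) (s : Fin k) (σ : Equiv.Perm (Fin 3)) (j : Fin 4) :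
    @Fin.snoc 3 (fun _ => Fin k) p s (extPerm σ j) = @Fin.snoc 3 (fun _ => Fin k) (p ∘ σ) s j := by
  refine Fin.lastCases ?_ ?_ j
  · simp only [extPerm_last, Fin.snoc_last]
  · intro i; simp [extPerm_castSucc]

lemma exists_extPerm (π : Equiv.Perm (Fin 4)) (hπ : π (Fin.last 3) = Fin.last 3) :
    ∃ σ : Equiv.Perm (Fin 3), π = extPerm σ := by
  have hne : ∀ i : Fin 3, π i.castSucc ≠ Fin.last 3 := by
    intro i h
    have : i.castSucc = Fin.last 3 := π.injective (h.trans hπ.symm)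
    exact absurd this (Fin.castSucc_lt_last i).ne
  have hne' : ∀ i : Fin 3, π⁻¹ i.castSucc ≠ Fin.last 3 := by
    intro i h
    have h2 : i.castSucc = π (Fin.last 3) := by
      rw [← h]; simp
    rw [hπ] at h2
    exact absurd h2 (Fin.castSucc_lt_last i).ne
  refine ⟨⟨fun i => (π i.castSucc).castPred (hne i),
          fun i => (π⁻¹ i.castSucc).castPred (hne' i), ?_, ?_⟩, ?_⟩
  · intro i; simp
  · intro i; simp
  · apply Equiv.ext
    intro j
    cases j using Fin.lastCases with
    | last => rw [extPerm_last, hπ]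
    | cast i => simp [extPerm_castSucc, extPerm]


/-- G ∈ 𝒢_{[4;k]} is symmetric iff
(i) c₁(x) = c₂(x∘μ₁), c₂(x) = c₃(x∘μ₂), c₃(x) = c₄(x∘μ₃) for every profile x, and
(ii) for every nondecreasing triple p : Fin 3 → Fin k, every q in the S₃-orbit of p and
every s ∈ Fin k, c₄ takes the same value on (p, s) as on (q, s) (profiles formed by
appending s as the last coordinate, via `Fin.snoc`).
Players 1,2,3,4 are the indices 0,1,2,3 of `Fin 4`; μ₁ = swap 0 1, μ₂ = swap 1 2,
μ₃ = swap 2 3 in 0-based coordinates. -/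
theorem symmetric_four_player_minimal_test (k : ℕ) (hk : 1 ≤ k)
    (c : Fin 4 → (Fin 4 → Fin k) → ℝ) :
    (∀ (σ : Equiv.Perm (Fin 4)) (i : Fin 4) (x : Fin 4 → Fin k),
        c i x = c (σ i) (fun j => x (σ⁻¹ j))) ↔
    ((∀ x : Fin 4 → Fin k,
        c 0 x = c 1 (fun j => x (Equiv.swap (0 : Fin 4) 1 j)) ∧
        c 1 x = c 2 (fun j => x (Equiv.swap (1 : Fin 4) 2 j)) ∧
        c 2 x = c 3 (fun j => x (Equiv.swap (2 : Fin 4) 3 j))) ∧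
     (∀ p q : Fin 3 → Fin k, Monotone p →
        (∃ σ : Equiv.Perm (Fin 3), q = p ∘ σ) →
        ∀ s : Fin k, c 3 (Fin.snoc p s) = c 3 (Fin.snoc q s))) := by
  constructor
  · intro h
    constructor
    · intro x
      refine ⟨?_, ?_, ?_⟩
      · simpa [Equiv.swap_inv] using h (Equiv.swap (0 : Fin 4) 1) 0 x
      · simpa [Equiv.swap_inv] using h (Equiv.swap (1 : Fin 4) 2) 1 x
      · simpa [Equiv.swap_inv] using h (Equiv.swap (2 : Fin 4) 3) 2 x
    · rintro p q hm ⟨σ, rfl⟩ s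
      have h3 : extPerm σ⁻¹ 3 = 3 := extPerm_last σ⁻¹
      have := h (extPerm σ⁻¹) 3 (Fin.snoc p s)
      rw [h3] at this
      rw [this]
      congr 1
      funext j
      rw [extPerm_inv, inv_inv]
      exact snoc_extPerm p s σ j
  · rintro ⟨hi, hii⟩
    -- invariance of c 3 under permutations of the first three coordinates, on snoc profiles
    have h3 : ∀ (p : Fin 3 → Fin k) (σ : Equiv.Perm (Fin 3)) (s : Fin k),
        c 3 (Fin.snoc p s) = c 3 (Fin.snoc (p ∘ σ) s) := by
      intro p σ s
      set τ := Tuple.sort p with hτ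
      have hm : Monotone (p ∘ τ) := Tuple.monotone_sort p
      have h1 := hii (p ∘ τ) p hm ⟨τ⁻¹, by funext j; simp⟩ s
      have h2 := hii (p ∘ τ) (p ∘ σ) hm ⟨τ⁻¹ * σ, by funext j; simp⟩ s
      rw [← h1, h2]
    -- invariance of c 3 under any permutation fixing the last coordinate
    have hfix : ∀ (π : Equiv.Perm (Fin 4)), π 3 = 3 → ∀ x : Fin 4 → Fin k,
        c 3 x = c 3 (fun j => x (π j)) := by
      intro π hπ x
      obtain ⟨σ, rfl⟩ := exists_extPerm π hπ
      have hx : x = Fin.snoc (Fin.init x) (x (Fin.last 3)) := (Fin.snoc_init_self x).symm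
      have key := h3 (Fin.init x) σ (x (Fin.last 3))
      rw [← hx] at key
      rw [key]
      congr 1
      funext j
      rw [show (Fin.init x ∘ σ) = (fun i => Fin.init x (σ i)) from rfl,
        show (fun i => Fin.init x (σ i)) = Fin.init x ∘ σ from rfl,
        ← snoc_extPerm (Fin.init x) (x (Fin.last 3)) σ j, Fin.snoc_init_self]
    -- the chain expressing each c i through c 3
    have hchain : ∀ (i : Fin 4) (x : Fin 4 → Fin k), ∃ ρ : Equiv.Perm (Fin 4),
        ρ 3 = i ∧ c i x = c 3 (fun j => x (ρ j)) := by
      intro i x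
      fin_cases i
      · refine ⟨Equiv.swap 0 1 * Equiv.swap 1 2 * Equiv.swap 2 3, by decide, ?_⟩
        show c 0 x = _
        rw [(hi x).1, (hi _).2.1, (hi _).2.2]
        rfl
      · refine ⟨Equiv.swap 1 2 * Equiv.swap 2 3, by decide, ?_⟩
        show c 1 x = _
        rw [(hi x).2.1, (hi _).2.2]
        rfl
      · refine ⟨Equiv.swap 2 3, by decide, ?_⟩
        show c 2 x = _
        rw [(hi x).2.2]
      · exact ⟨1, by decide, rfl⟩
    intro σ i x
    obtain ⟨ρ₁, hρ₁, e₁⟩ := hchain i x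
    obtain ⟨ρ₂, hρ₂, e₂⟩ := hchain (σ i) (fun j => x (σ⁻¹ j))
    rw [e₁, e₂]
    have hπ : (ρ₁⁻¹ * (σ⁻¹ * ρ₂)) 3 = 3 := by
      simp [Equiv.Perm.mul_apply, hρ₂, hρ₁.symm]
    have := hfix _ hπ (fun j => x (ρ₁ j))
    rw [this]
    congr 1
    funext j
    simp [Equiv.Perm.mul_apply]
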